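/- Let n ≥ 3 and s ≥ 1. Then monomials U, V belong to F(J(P_{n−2})^s) if and only if x_{n−1}^s·U and x_{n−1}^s·V belong to F(J(P_n)^s). Moreover, in that case: (1) U >_R V in the rooted order on F(J(P_{n−2})^s) if and only if x_{n−1}^s·U >_R x_{n−1}^s·V in the rooted order on F(J(P_n)^s); and (2) U ∈ G(J(P_{n−2})^s) if and only if x_{n−1}^s·U ∈ G(J(P_n)^s). -/

import Mathlib

open MvPolynomial

noncomputable section

/-- The cover ideal of the path graph `P_n` on vertices `x_1, …, x_n`:
the intersection of the ideals `(x_i, x_{i+1})` over the edges of the path. -/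
def pathCoverIdeal (k : Type*) [Field k] (n : ℕ) : Ideal (MvPolynomial ℕ k) :=
  ⨅ i ∈ Finset.Icc 1 (n - 1), Ideal.span {(X i : MvPolynomial ℕ k), X (i + 1)}

/-- A monomial with coefficient `1`. -/
def IsMonomial {k : Type*} [Field k] (m : MvPolynomial ℕ k) : Prop :=
  ∃ a : ℕ →₀ ℕ, m = monomial a 1

/-- The minimal monomial generating set `G(I)` of a monomial ideal `I`:
monomials of `I` that are not strictly divisible by another monomial of `I`. -/
def minGens {k : Type*} [Field k] (I : Ideal (MvPolynomial ℕ k)) :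
    Set (MvPolynomial ℕ k) :=
  {m | IsMonomial m ∧ m ∈ I ∧ ∀ m', IsMonomial m' → m' ∈ I → m' ∣ m → m' = m}

/-- The rooted list `R(P_n)` of the path `P_n`. -/
def rootedList (k : Type*) [Field k] : ℕ → List (MvPolynomial ℕ k)
  | 0 => [1]
  | 1 => [1]
  | 2 => [X 1, X 2]
  | 3 => [X 2, X 1 * X 3]
  | (n + 4) =>
      ((rootedList k (n + 2)).map fun u => X (n + 3) * u) ++
      ((rootedList k (n + 1)).map fun u => X (n + 4) * X (n + 2) * u)

/-- `F(I^s)`: the set of `s`-fold products of minimal generators of `I`. -/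
def sFold {k : Type*} [Field k] (I : Ideal (MvPolynomial ℕ k)) (s : ℕ) :
    Set (MvPolynomial ℕ k) :=
  {m | ∃ L : List (MvPolynomial ℕ k), L.length = s ∧ (∀ u ∈ L, u ∈ minGens I) ∧ m = L.prod}

/-- `a >_lex b`: the first entry where `a` and `b` differ is bigger in `a`. -/
def lexGt (a b : ℕ → ℕ) : Prop :=
  ∃ t, (∀ j, j < t → a j = b j) ∧ b t < a t

/-- `a` is an exponent-vector expression of `M` as an `s`-fold product of the terms of
the list `L`. -/
def IsExprOn {k : Type*} [Field k] (L : List (MvPolynomial ℕ k)) (s : ℕ) (a : ℕ → ℕ)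
    (M : MvPolynomial ℕ k) : Prop :=
  (∀ i, L.length ≤ i → a i = 0) ∧ (∑ i ∈ Finset.range L.length, a i) = s ∧
    M = ∏ i ∈ Finset.range L.length, (L.getD i 1) ^ (a i)

/-- `a` is the (lexicographically) maximal expression of `M` as an `s`-fold product of
the terms of the list `L`. -/
def IsMaxExpr {k : Type*} [Field k] (L : List (MvPolynomial ℕ k)) (s : ℕ) (a : ℕ → ℕ)
    (M : MvPolynomial ℕ k) : Prop :=
  IsExprOn L s a M ∧ ∀ b, IsExprOn L s b M → b ≠ a → lexGt a b

/-- The rooted order `M >_R N` on `s`-fold products, relative to the list `L` of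
minimal generators: maximal expressions are compared lexicographically. -/
def rootedGt {k : Type*} [Field k] (L : List (MvPolynomial ℕ k)) (s : ℕ)
    (M N : MvPolynomial ℕ k) : Prop :=
  ∃ a b, IsMaxExpr L s a M ∧ IsMaxExpr L s b N ∧ lexGt a b

/-- An ideal is generated by a subset of the variables. -/
def genByVars {k : Type*} [Field k] (I : Ideal (MvPolynomial ℕ k)) : Prop :=
  ∃ T : Set ℕ, I = Ideal.span ((fun i => (X i : MvPolynomial ℕ k)) '' T)

end

namespace PureAux

variable {k : Type*} [Field k]

/-- cover predicate on exponent vectors. -/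
def Cov (N : ℕ) (d : ℕ →₀ ℕ) : Prop := ∀ i ∈ Finset.Icc 1 (N - 1), 1 ≤ d i ∨ 1 ≤ d (i + 1)

def MinCov (N : ℕ) (d : ℕ →₀ ℕ) : Prop := Cov N d ∧ ∀ e ≤ d, Cov N e → e = d

def CovS (N s : ℕ) (d : ℕ →₀ ℕ) : Prop :=
  ∃ E : List (ℕ →₀ ℕ), E.length = s ∧ (∀ e ∈ E, Cov N e) ∧ d = E.sum

lemma finsupp_le_apply {f g : ℕ →₀ ℕ} (h : f ≤ g) (x : ℕ) : f x ≤ g x := Finsupp.le_def.mp h x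

lemma erase_le (f : ℕ →₀ ℕ) (a : ℕ) : f.erase a ≤ f := by
  rw [Finsupp.le_def]
  intro i
  rw [Finsupp.erase_apply]
  split <;> simp

lemma span_pair_eq (i j : ℕ) :
    Ideal.span {(X i : MvPolynomial ℕ k), X j} =
      Ideal.span ((fun d => (monomial d (1 : k))) ''
        {Finsupp.single i 1, Finsupp.single j 1}) := by
  rw [Set.image_pair]
  rfl

lemma mem_span_pair_iff (i j : ℕ) (p : MvPolynomial ℕ k) :
    p ∈ Ideal.span {(X i : MvPolynomial ℕ k), X j} ↔
      ∀ d ∈ p.support, 1 ≤ d i ∨ 1 ≤ d j := by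
  rw [span_pair_eq, mem_ideal_span_monomial_image]
  apply forall₂_congr
  intro d _
  constructor
  · rintro ⟨si, hsi, hle⟩
    rcases hsi with h | h <;> subst h
    · exact Or.inl (Finsupp.single_le_iff.mp hle)
    · exact Or.inr (Finsupp.single_le_iff.mp hle)
  · rintro (h | h)
    · exact ⟨Finsupp.single i 1, Or.inl rfl, Finsupp.single_le_iff.mpr h⟩
    · exact ⟨Finsupp.single j 1, Or.inr rfl, Finsupp.single_le_iff.mpr h⟩

lemma pathCoverIdeal_eq (N : ℕ) :
    pathCoverIdeal k N =
      Ideal.span ((fun d => (monomial d (1 : k))) '' {d | Cov N d}) := by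
  classical
  apply le_antisymm
  · intro p hp
    rw [mem_ideal_span_monomial_image]
    intro d hd
    refine ⟨d, ?_, le_refl d⟩
    intro i hi
    simp only [pathCoverIdeal, Ideal.mem_iInf] at hp
    exact (mem_span_pair_iff i (i + 1) p).mp (hp i hi) d hd
  · rw [Ideal.span_le]
    rintro _ ⟨d, hd, rfl⟩
    simp only [pathCoverIdeal, SetLike.mem_coe, Ideal.mem_iInf]
    intro i hi
    rw [mem_span_pair_iff]
    intro e he
    rw [support_monomial, if_neg (one_ne_zero)] at he
    simp only [Finset.mem_singleton] at he
    subst he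
    exact hd i hi

lemma mem_path_iff (N : ℕ) (d : ℕ →₀ ℕ) :
    (monomial d (1 : k)) ∈ pathCoverIdeal k N ↔ Cov N d := by
  classical
  rw [pathCoverIdeal_eq, mem_ideal_span_monomial_image]
  constructor
  · intro h
    have hd : d ∈ (monomial d (1 : k)).support := by
      rw [support_monomial, if_neg one_ne_zero]; exact Finset.mem_singleton_self d
    obtain ⟨e, he, hle⟩ := h d hd
    intro i hi
    rcases he i hi with h' | h'
    · exact Or.inl (le_trans h' (finsupp_le_apply hle i))
    · exact Or.inr (le_trans h' (finsupp_le_apply hle (i + 1)))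
  · intro h e he
    rw [support_monomial, if_neg one_ne_zero, Finset.mem_singleton] at he
    exact ⟨d, h, he.ge⟩

lemma path_pow_eq (N s : ℕ) :
    (pathCoverIdeal k N) ^ s =
      Ideal.span ((fun d => (monomial d (1 : k))) '' {d | CovS N s d}) := by
  classical
  induction s with
  | zero =>
    have : {d : ℕ →₀ ℕ | CovS N 0 d} = {0} := by
      ext d
      simp only [Set.mem_setOf_eq, CovS, Set.mem_singleton_iff]
      constructor
      · rintro ⟨E, hE, _, rfl⟩
        rw [List.length_eq_zero_iff] at hE
        subst hE; rfl
      · rintro rfl; exact ⟨[], rfl, by simp, rfl⟩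
    rw [this, pow_zero]
    simp only [Set.image_singleton, monomial_zero', C_1]
    rw [Ideal.span_singleton_one, Ideal.one_eq_top]
  | succ s ih =>
    rw [pow_succ', ih, pathCoverIdeal_eq, Ideal.span_mul_span']
    congr 1
    ext p
    simp only [Set.mem_mul, Set.mem_image, Set.mem_setOf_eq]
    constructor
    · rintro ⟨a, ⟨e, he, rfl⟩, b, ⟨f, ⟨E, hlen, hcov, rfl⟩, rfl⟩, rfl⟩
      refine ⟨e + E.sum, ⟨e :: E, by simp [hlen], ?_, by simp⟩, ?_⟩
      · intro x hx
        rcases List.mem_cons.mp hx with rfl | hx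
        · exact he
        · exact hcov x hx
      · rw [monomial_mul, one_mul]
    · rintro ⟨d, ⟨E, hlen, hcov, rfl⟩, rfl⟩
      cases E with
      | nil => simp at hlen
      | cons e E =>
        refine ⟨monomial e 1, ⟨e, hcov e List.mem_cons_self, rfl⟩,
          monomial E.sum 1, ⟨E.sum, ⟨E, by simpa using hlen, fun x hx => hcov x (List.mem_cons_of_mem e hx), rfl⟩, rfl⟩, ?_⟩
        rw [monomial_mul, one_mul, List.sum_cons]

lemma mem_path_pow_iff (N s : ℕ) (d : ℕ →₀ ℕ) :
    (monomial d (1 : k)) ∈ (pathCoverIdeal k N) ^ s ↔ ∃ e, CovS N s e ∧ e ≤ d := by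
  classical
  rw [path_pow_eq, mem_ideal_span_monomial_image]
  constructor
  · intro h
    have hd : d ∈ (monomial d (1 : k)).support := by
      rw [support_monomial, if_neg one_ne_zero]; exact Finset.mem_singleton_self d
    obtain ⟨e, he, hle⟩ := h d hd
    exact ⟨e, he, hle⟩
  · rintro ⟨e, he, hle⟩ f hf
    rw [support_monomial, if_neg one_ne_zero, Finset.mem_singleton] at hf
    subst hf
    exact ⟨e, he, hle⟩

lemma minGens_monomial_iff (I : Ideal (MvPolynomial ℕ k)) (d : ℕ →₀ ℕ) :
    (monomial d (1 : k)) ∈ minGens I ↔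
      (monomial d (1 : k)) ∈ I ∧ ∀ f ≤ d, (monomial f (1 : k)) ∈ I → f = d := by
  constructor
  · rintro ⟨_, hmem, hmin⟩
    refine ⟨hmem, fun f hf hfI => ?_⟩
    have hdvd : (monomial f (1 : k)) ∣ monomial d 1 := by
      refine ⟨monomial (d - f) 1, ?_⟩
      rw [monomial_mul, one_mul, add_tsub_cancel_of_le hf]
    have := hmin (monomial f 1) ⟨f, rfl⟩ hfI hdvd
    rcases (monomial_eq_monomial_iff f d (1:k) 1).mp this with ⟨h1, _⟩ | ⟨h1, _⟩
    · exact h1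
    · exact absurd h1 one_ne_zero
  · rintro ⟨hmem, hmin⟩
    refine ⟨⟨d, rfl⟩, hmem, ?_⟩
    rintro m' ⟨f, rfl⟩ hfI hdvd
    rcases monomial_dvd_monomial.mp hdvd with ⟨(h | h), _⟩
    · exact absurd h one_ne_zero
    · rw [hmin f h hfI]

lemma minGens_path_iff (N : ℕ) (d : ℕ →₀ ℕ) :
    (monomial d (1 : k)) ∈ minGens (pathCoverIdeal k N) ↔ MinCov N d := by
  rw [minGens_monomial_iff, mem_path_iff]
  unfold MinCov
  constructor
  · rintro ⟨h1, h2⟩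
    exact ⟨h1, fun e he hce => h2 e he ((mem_path_iff N e).mpr hce)⟩
  · rintro ⟨h1, h2⟩
    exact ⟨h1, fun e he hce => h2 e he ((mem_path_iff N e).mp hce)⟩

lemma mem_minGens_path (N : ℕ) (w : MvPolynomial ℕ k) :
    w ∈ minGens (pathCoverIdeal k N) ↔ ∃ d, w = monomial d 1 ∧ MinCov N d := by
  constructor
  · intro hw
    obtain ⟨d, rfl⟩ := hw.1
    exact ⟨d, rfl, (minGens_path_iff N d).mp hw⟩
  · rintro ⟨d, rfl, h⟩
    exact (minGens_path_iff N d).mpr h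

end PureAux
namespace PureAux

variable {k : Type*} [Field k]

lemma add_single_apply (e : ℕ →₀ ℕ) (a b x : ℕ) :
    (e + Finsupp.single a b) x = e x + if a = x then b else 0 := by
  rw [Finsupp.add_apply, Finsupp.single_apply]

lemma MinCov.shape {N : ℕ} {d : ℕ →₀ ℕ} (h : MinCov N d) (j : ℕ) :
    d j ≤ 1 ∧ (j ∉ Finset.Icc 1 N → d j = 0) := by
  classical
  set S : Finset ℕ := d.support ∩ Finset.Icc 1 N with hS
  set f : ℕ →₀ ℕ := Finsupp.indicator S (fun _ _ => 1) with hf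
  have hfval : ∀ x, f x = if x ∈ S then 1 else 0 := by
    intro x
    by_cases hx : x ∈ S
    · rw [if_pos hx, hf, Finsupp.indicator_of_mem hx]
    · rw [if_neg hx, hf, Finsupp.indicator_of_notMem hx]
  have hfle : f ≤ d := by
    rw [Finsupp.le_def]
    intro x
    rw [hfval]
    split
    · next hx =>
      have := (Finset.mem_inter.mp hx).1
      rw [Finsupp.mem_support_iff] at this
      omega
    · omega
  have hcov : Cov N f := by
    intro i hi
    rw [Finset.mem_Icc] at hi
    rcases h.1 i (Finset.mem_Icc.mpr hi) with h' | h'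
    · have hmem : i ∈ S := by
        rw [hS, Finset.mem_inter, Finsupp.mem_support_iff, Finset.mem_Icc]
        refine ⟨by omega, by omega, by omega⟩
      left; rw [hfval, if_pos hmem]
    · have hmem : i + 1 ∈ S := by
        rw [hS, Finset.mem_inter, Finsupp.mem_support_iff, Finset.mem_Icc]
        refine ⟨by omega, by omega, by omega⟩
      right; rw [hfval, if_pos hmem]
  have hfd : f = d := h.2 f hfle hcov
  constructor
  · rw [← hfd, hfval]; split <;> omega
  · intro hj
    rw [← hfd, hfval, if_neg]
    intro hx
    exact hj (Finset.mem_inter.mp hx).2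

lemma cov_add_single {m : ℕ} {e : ℕ →₀ ℕ} (h : Cov (m + 1) e) :
    Cov (m + 3) (e + Finsupp.single (m + 2) 1) := by
  intro i hi
  rw [Finset.mem_Icc] at hi
  rcases Nat.lt_or_ge i (m + 1) with hlt | hge
  · rcases h i (by rw [Finset.mem_Icc]; omega) with h' | h'
    · left; rw [add_single_apply]; omega
    · right; rw [add_single_apply]; omega
  · have : i + 1 = m + 2 ∨ i = m + 2 := by omega
    rcases this with h' | h'
    · right; rw [add_single_apply, if_pos h'.symm]; omega
    · left; rw [add_single_apply, if_pos h'.symm]; omega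

lemma minCov_add_single {m : ℕ} {e : ℕ →₀ ℕ} (h : MinCov (m + 1) e) :
    MinCov (m + 3) (e + Finsupp.single (m + 2) 1) := by
  have he2 : e (m + 2) = 0 := (h.shape (m + 2)).2 (by simp [Finset.mem_Icc])
  have he3 : e (m + 3) = 0 := (h.shape (m + 3)).2 (by simp [Finset.mem_Icc])
  refine ⟨cov_add_single h.1, ?_⟩
  intro f hfle hfcov
  have hfle' := Finsupp.le_def.mp hfle
  have hf3 : f (m + 3) = 0 := by
    have h1 := hfle' (m + 3)
    rw [add_single_apply, if_neg (by omega)] at h1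
    omega
  have hf2 : f (m + 2) = 1 := by
    have h1 := hfle' (m + 2)
    rw [add_single_apply, if_pos rfl] at h1
    rcases hfcov (m + 2) (by rw [Finset.mem_Icc]; omega) with h' | h'
    · omega
    · have hr : f (m + 2 + 1) = f (m + 3) := rfl
      omega
  have hgle : f.erase (m + 2) ≤ e := by
    rw [Finsupp.le_def]
    intro x
    rw [Finsupp.erase_apply]
    split
    · omega
    · next hx =>
      have h1 := hfle' x
      rw [add_single_apply, if_neg (fun hh => hx hh.symm)] at h1
      omega
  have hgcov : Cov (m + 1) (f.erase (m + 2)) := by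
    intro i hi
    rw [Finset.mem_Icc] at hi
    rcases hfcov i (by rw [Finset.mem_Icc]; omega) with h' | h'
    · left; rw [Finsupp.erase_apply, if_neg (by omega)]; exact h'
    · right; rw [Finsupp.erase_apply, if_neg (by omega)]; exact h'
  have hge : f.erase (m + 2) = e := h.2 _ hgle hgcov
  have h2 := Finsupp.erase_add_single (m + 2) f
  rw [hf2, hge] at h2
  exact h2.symm

lemma minCov_split {m : ℕ} {d : ℕ →₀ ℕ} (h : MinCov (m + 3) d) (hd : 1 ≤ d (m + 2)) :
    ∃ e, d = e + Finsupp.single (m + 2) 1 ∧ MinCov (m + 1) e := by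
  have hd2 : d (m + 2) = 1 := le_antisymm (h.shape (m + 2)).1 hd
  have hd3 : d (m + 3) = 0 := by
    have hgle : d.erase (m + 3) ≤ d := erase_le d (m + 3)
    have hgcov : Cov (m + 3) (d.erase (m + 3)) := by
      intro i hi
      rw [Finset.mem_Icc] at hi
      rcases Nat.lt_or_ge i (m + 2) with hlt | hge2
      · rcases h.1 i (by rw [Finset.mem_Icc]; omega) with h' | h'
        · left; rw [Finsupp.erase_apply, if_neg (by omega)]; exact h'
        · right; rw [Finsupp.erase_apply, if_neg (by omega)]; exact h'
      · have hieq : i = m + 2 := by omega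
        subst hieq
        left; rw [Finsupp.erase_apply, if_neg (by omega)]; omega
    have h1 := h.2 _ hgle hgcov
    calc d (m + 3) = (d.erase (m + 3)) (m + 3) := by rw [h1]
    _ = 0 := by rw [Finsupp.erase_apply, if_pos rfl]
  refine ⟨d.erase (m + 2), ?_, ?_, ?_⟩
  · have h1 := Finsupp.erase_add_single (m + 2) d
    rw [hd2] at h1
    exact h1.symm
  · intro i hi
    rw [Finset.mem_Icc] at hi
    rcases h.1 i (by rw [Finset.mem_Icc]; omega) with h' | h'
    · left; rw [Finsupp.erase_apply, if_neg (by omega)]; exact h'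
    · right; rw [Finsupp.erase_apply, if_neg (by omega)]; exact h'
  · intro f hfle hfcov
    have hfle' := Finsupp.le_def.mp hfle
    have hf2 : f (m + 2) = 0 := by
      have h1 := hfle' (m + 2)
      rw [Finsupp.erase_apply, if_pos rfl] at h1
      omega
    have hf'le : f + Finsupp.single (m + 2) 1 ≤ d := by
      rw [Finsupp.le_def]
      intro x
      rw [add_single_apply]
      by_cases hx : m + 2 = x
      · rw [if_pos hx, ← hx]
        omega
      · rw [if_neg hx]
        have h1 := hfle' x
        rw [Finsupp.erase_apply, if_neg (fun hh => hx hh.symm)] at h1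
        omega
    have hf'cov : Cov (m + 3) (f + Finsupp.single (m + 2) 1) := cov_add_single hfcov
    have heq := h.2 _ hf'le hf'cov
    ext x
    have hx := congrFun (congrArg (fun (g : ℕ →₀ ℕ) => (g : ℕ → ℕ)) heq) x
    simp only [Finsupp.coe_add, Pi.add_apply, Finsupp.single_apply] at hx
    rw [Finsupp.erase_apply]
    by_cases hxx : x = m + 2
    · rw [if_pos hxx, hxx]
      omega
    · rw [if_neg hxx]
      rw [if_neg (fun hh => hxx hh.symm)] at hx
      omega

end PureAux
namespace PureAux

variable {k : Type*} [Field k]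

lemma list_monomial_prod (E : List (ℕ →₀ ℕ)) :
    (E.map (fun e => (monomial e (1 : k)))).prod = monomial E.sum 1 := by
  induction E with
  | nil => simp
  | cons e E ih =>
    rw [List.map_cons, List.prod_cons, ih, List.sum_cons, monomial_mul, one_mul]

lemma list_sum_apply (E : List (ℕ →₀ ℕ)) (x : ℕ) :
    E.sum x = (E.map (fun e => e x)).sum := by
  induction E with
  | nil => simp
  | cons e E ih => rw [List.sum_cons, List.map_cons, List.sum_cons, Finsupp.add_apply, ih]

lemma list_sum_le_length {L : List ℕ} (h : ∀ x ∈ L, x ≤ 1) : L.sum ≤ L.length := by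
  induction L with
  | nil => simp
  | cons a t ih =>
    rw [List.sum_cons, List.length_cons]
    have ha := h a List.mem_cons_self
    have := ih (fun x hx => h x (List.mem_cons_of_mem a hx))
    omega

lemma list_all_eq_one {L : List ℕ} (h : ∀ x ∈ L, x ≤ 1) (hs : L.length ≤ L.sum) :
    ∀ x ∈ L, x = 1 := by
  induction L with
  | nil => simp
  | cons a t ih =>
    rw [List.sum_cons, List.length_cons] at hs
    have ha := h a List.mem_cons_self
    have hts := list_sum_le_length (fun x hx => h x (List.mem_cons_of_mem a hx))
    intro x hx
    rcases List.mem_cons.mp hx with rfl | hx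
    · omega
    · exact ih (fun y hy => h y (List.mem_cons_of_mem a hy)) (by omega) x hx

lemma length_le_list_sum {L : List ℕ} (h : ∀ x ∈ L, 1 ≤ x) : L.length ≤ L.sum := by
  induction L with
  | nil => simp
  | cons a t ih =>
    rw [List.sum_cons, List.length_cons]
    have ha := h a List.mem_cons_self
    have := ih (fun x hx => h x (List.mem_cons_of_mem a hx))
    omega

lemma mem_le_list_sum {L : List ℕ} {x : ℕ} (h : x ∈ L) : x ≤ L.sum := by
  induction L with
  | nil => simp at h
  | cons a t ih =>
    rw [List.sum_cons]
    rcases List.mem_cons.mp h with rfl | h'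
    · omega
    · have := ih h'
      omega

lemma sFold_iff (N s : ℕ) (U : MvPolynomial ℕ k) :
    U ∈ sFold (pathCoverIdeal k N) s ↔
      ∃ E : List (ℕ →₀ ℕ), E.length = s ∧ (∀ e ∈ E, MinCov N e) ∧ U = monomial E.sum 1 := by
  constructor
  · rintro ⟨L, hlen, hmem, rfl⟩
    subst hlen
    induction L with
    | nil => exact ⟨[], rfl, by simp, by simp⟩
    | cons w t ih =>
      obtain ⟨E, hElen, hEcov, hEprod⟩ := ih (fun u hu => hmem u (List.mem_cons_of_mem w hu))
      obtain ⟨d, rfl, hd⟩ := (mem_minGens_path N w).mp (hmem w List.mem_cons_self)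
      refine ⟨d :: E, by simp [hElen], ?_, ?_⟩
      · intro e he
        rcases List.mem_cons.mp he with rfl | he
        · exact hd
        · exact hEcov e he
      · rw [List.prod_cons, hEprod, List.sum_cons, monomial_mul, one_mul]
  · rintro ⟨E, hlen, hcov, rfl⟩
    refine ⟨E.map (fun e => monomial e 1), by simp [hlen], ?_, (list_monomial_prod E).symm⟩
    intro u hu
    rw [List.mem_map] at hu
    obtain ⟨e, he, rfl⟩ := hu
    exact (minGens_path_iff N e).mpr (hcov e he)

lemma map_add_single_sum (E : List (ℕ →₀ ℕ)) (a : ℕ) :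
    (E.map (fun e => e + Finsupp.single a 1)).sum = E.sum + Finsupp.single a E.length := by
  induction E with
  | nil => simp
  | cons e t ih =>
    rw [List.map_cons, List.sum_cons, ih, List.sum_cons, List.length_cons,
      show (t.length + 1 : ℕ) = 1 + t.length by omega, Finsupp.single_add]
    abel

/-- Key lemma for part (0): the sFold shift. -/
lemma sFold_shift (m s : ℕ) (U : MvPolynomial ℕ k) :
    (X (m + 2) : MvPolynomial ℕ k) ^ s * U ∈ sFold (pathCoverIdeal k (m + 3)) s ↔
      U ∈ sFold (pathCoverIdeal k (m + 1)) s := by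
  constructor
  · intro h
    obtain ⟨E, hlen, hcov, heq⟩ := (sFold_iff (m + 3) s _).mp h
    -- every e in E has e (m+2) = 1
    have hle1 : ∀ x ∈ E.map (fun e => e (m + 2)), x ≤ 1 := by
      intro x hx
      rw [List.mem_map] at hx
      obtain ⟨e, he, rfl⟩ := hx
      exact ((hcov e he).shape (m + 2)).1
    have hdvd : (monomial (Finsupp.single (m + 2) s) (1 : k)) ∣ monomial E.sum 1 := by
      refine ⟨U, ?_⟩
      rw [← X_pow_eq_monomial, ← heq]
    have hsle : s ≤ E.sum (m + 2) := by
      rcases monomial_dvd_monomial.mp hdvd with ⟨(h' | h'), _⟩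
      · exact absurd h' one_ne_zero
      · exact Finsupp.single_le_iff.mp h'
    rw [list_sum_apply] at hsle
    have hall : ∀ x ∈ E.map (fun e => e (m + 2)), x = 1 :=
      list_all_eq_one hle1 (by rw [List.length_map, hlen]; exact hsle)
    -- skolemize: each e splits
    have hsplit : ∀ e ∈ E, ∃ f, e = f + Finsupp.single (m + 2) 1 ∧ MinCov (m + 1) f := by
      intro e he
      refine minCov_split (hcov e he) ?_
      have := hall (e (m + 2)) (List.mem_map.mpr ⟨e, he, rfl⟩)
      omega
    have hF : ∀ (E' : List (ℕ →₀ ℕ)), (∀ e ∈ E', ∃ f, e = f + Finsupp.single (m + 2) 1 ∧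
        MinCov (m + 1) f) → ∃ F : List (ℕ →₀ ℕ), F.length = E'.length ∧
        (∀ f ∈ F, MinCov (m + 1) f) ∧ E'.sum = F.sum + Finsupp.single (m + 2) E'.length := by
      intro E'
      induction E' with
      | nil => intro _; exact ⟨[], rfl, by simp, by simp⟩
      | cons e t ih =>
        intro hyp
        obtain ⟨F, hFlen, hFcov, hFsum⟩ := ih (fun x hx => hyp x (List.mem_cons_of_mem e hx))
        obtain ⟨f, hf, hfcov⟩ := hyp e List.mem_cons_self
        refine ⟨f :: F, by simp [hFlen], ?_, ?_⟩
        · intro g hg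
          rcases List.mem_cons.mp hg with rfl | hg
          · exact hfcov
          · exact hFcov g hg
        · rw [List.sum_cons, List.sum_cons, hFsum, hf, List.length_cons,
            show (t.length + 1 : ℕ) = 1 + t.length by omega, Finsupp.single_add]
          abel
    obtain ⟨F, hFlen, hFcov, hFsum⟩ := hF E hsplit
    rw [hFsum, hlen] at heq
    have hXne : (X (m + 2) : MvPolynomial ℕ k) ^ s ≠ 0 := pow_ne_zero _ (X_ne_zero _)
    have hU : U = monomial F.sum 1 := by
      apply mul_left_cancel₀ hXne
      rw [heq, X_pow_eq_monomial, monomial_mul, one_mul, add_comm]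
    exact (sFold_iff (m + 1) s U).mpr ⟨F, by rw [hFlen, hlen], hFcov, hU⟩
  · intro h
    obtain ⟨E, hlen, hcov, rfl⟩ := (sFold_iff (m + 1) s U).mp h
    refine (sFold_iff (m + 3) s _).mpr
      ⟨E.map (fun e => e + Finsupp.single (m + 2) 1), by simp [hlen], ?_, ?_⟩
    · intro e he
      rw [List.mem_map] at he
      obtain ⟨f, hf, rfl⟩ := he
      exact minCov_add_single (hcov f hf)
    · rw [map_add_single_sum, hlen, X_pow_eq_monomial, monomial_mul, one_mul, add_comm]

end PureAux
namespace PureAux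

variable {k : Type*} [Field k]

lemma minGens_pow_iff (N s : ℕ) (d : ℕ →₀ ℕ) :
    (monomial d (1 : k)) ∈ minGens ((pathCoverIdeal k N) ^ s) ↔
      (∃ e, CovS N s e ∧ e ≤ d) ∧ ∀ f ≤ d, (∃ e, CovS N s e ∧ e ≤ f) → f = d := by
  rw [minGens_monomial_iff]
  simp only [mem_path_pow_iff]

lemma list_erase_sum (E : List (ℕ →₀ ℕ)) (a : ℕ) :
    (E.map (fun e => e.erase a)).sum = E.sum.erase a := by
  induction E with
  | nil => simp
  | cons e t ih =>
    rw [List.map_cons, List.sum_cons, List.sum_cons, ih, Finsupp.erase_add]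

lemma minGens_pow_shift (m s : ℕ) (U : MvPolynomial ℕ k)
    (hU : U ∈ sFold (pathCoverIdeal k (m + 1)) s) :
    U ∈ minGens ((pathCoverIdeal k (m + 1)) ^ s) ↔
      (X (m + 2) : MvPolynomial ℕ k) ^ s * U ∈ minGens ((pathCoverIdeal k (m + 3)) ^ s) := by
  obtain ⟨E, hlen, hcov, rfl⟩ := (sFold_iff (m + 1) s U).mp hU
  set u := E.sum with hu
  have hval : ∀ j, m + 1 < j → u j = 0 := by
    intro j hj
    rw [hu, list_sum_apply]
    apply List.sum_eq_zero
    intro x hx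
    rw [List.mem_map] at hx
    obtain ⟨e, he, rfl⟩ := hx
    exact ((hcov e he).shape j).2 (by rw [Finset.mem_Icc]; omega)
  have hu2 : u (m + 2) = 0 := hval _ (by omega)
  have hu3 : u (m + 3) = 0 := hval _ (by omega)
  have hXU : (X (m + 2) : MvPolynomial ℕ k) ^ s * monomial u 1
      = monomial (u + Finsupp.single (m + 2) s) 1 := by
    rw [X_pow_eq_monomial, monomial_mul, one_mul, add_comm]
  set D := u + Finsupp.single (m + 2) s with hD
  have hD3 : D (m + 3) = 0 := by
    rw [hD, add_single_apply, if_neg (by omega)]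
    omega
  have hD2 : D (m + 2) = s := by
    rw [hD, add_single_apply, if_pos rfl]
    omega
  have hDother : ∀ x, ¬(x = m + 2) → D x = u x := by
    intro x hx
    rw [hD, add_single_apply, if_neg (fun h => hx h.symm)]
    omega
  have hcovSu : CovS (m + 1) s u := ⟨E, hlen, fun e he => (hcov e he).1, rfl⟩
  have hcovSD : CovS (m + 3) s D := by
    refine ⟨E.map (fun e => e + Finsupp.single (m + 2) 1), by simp [hlen], ?_, ?_⟩
    · intro e he
      rw [List.mem_map] at he
      obtain ⟨f, hf, rfl⟩ := he
      exact cov_add_single (hcov f hf).1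
    · rw [map_add_single_sum, hlen]
  rw [hXU, minGens_pow_iff, minGens_pow_iff]
  constructor
  · rintro ⟨_, hmin⟩
    refine ⟨⟨D, hcovSD, le_refl D⟩, ?_⟩
    rintro f hfle ⟨e, ⟨E', hE'len, hE'cov, rfl⟩, hef⟩
    have hfle' := Finsupp.le_def.mp hfle
    have hef' := Finsupp.le_def.mp hef
    have hE'3 : ∀ g ∈ E', g (m + 3) = 0 := by
      intro g hg
      have h1 : g (m + 3) ≤ E'.sum (m + 3) := by
        rw [list_sum_apply]
        exact mem_le_list_sum (List.mem_map.mpr ⟨g, hg, rfl⟩)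
      have h2 := hef' (m + 3)
      have h3 := hfle' (m + 3)
      omega
    have hE'2 : ∀ g ∈ E', 1 ≤ g (m + 2) := by
      intro g hg
      rcases hE'cov g hg (m + 2) (by rw [Finset.mem_Icc]; omega) with h' | h'
      · exact h'
      · have h1 := hE'3 g hg
        have hr : g (m + 2 + 1) = g (m + 3) := rfl
        omega
    have hsles : s ≤ E'.sum (m + 2) := by
      rw [list_sum_apply]
      have h1 := length_le_list_sum (L := E'.map (fun e => e (m + 2)))
        (by intro x hx; rw [List.mem_map] at hx; obtain ⟨g, hg, rfl⟩ := hx; exact hE'2 g hg)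
      rw [List.length_map, hE'len] at h1
      exact h1
    have hf2 : f (m + 2) = s := by
      have h2 := hef' (m + 2)
      have h3 := hfle' (m + 2)
      omega
    have hf'le : f.erase (m + 2) ≤ u := by
      rw [Finsupp.le_def]
      intro x
      rw [Finsupp.erase_apply]
      split
      · omega
      · next hx =>
        have h3 := hfle' x
        rw [hDother x hx] at h3
        exact h3
    have hwit : ∃ e, CovS (m + 1) s e ∧ e ≤ f.erase (m + 2) := by
      refine ⟨(E'.map (fun g => g.erase (m + 2))).sum, ⟨_, by simp [hE'len], ?_, rfl⟩, ?_⟩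
      · intro g hg
        rw [List.mem_map] at hg
        obtain ⟨g', hg', rfl⟩ := hg
        intro i hi
        rw [Finset.mem_Icc] at hi
        rcases hE'cov g' hg' i (by rw [Finset.mem_Icc]; omega) with h' | h'
        · left; rw [Finsupp.erase_apply, if_neg (by omega)]; exact h'
        · right; rw [Finsupp.erase_apply, if_neg (by omega)]; exact h'
      · rw [list_erase_sum, Finsupp.le_def]
        intro x
        rw [Finsupp.erase_apply, Finsupp.erase_apply]
        split
        · exact le_refl 0
        · exact hef' x
    have hfu := hmin (f.erase (m + 2)) hf'le hwit
    have h4 := Finsupp.erase_add_single (m + 2) f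
    rw [hf2, hfu] at h4
    rw [hD]
    exact h4.symm
  · rintro ⟨_, hmin⟩
    refine ⟨⟨u, hcovSu, le_refl u⟩, ?_⟩
    rintro f hfle ⟨e, hecov, hef⟩
    have h1 : f + Finsupp.single (m + 2) s ≤ D := by
      rw [hD]; exact add_le_add hfle (le_refl _)
    have h2 : ∃ e', CovS (m + 3) s e' ∧ e' ≤ f + Finsupp.single (m + 2) s := by
      obtain ⟨E', hE'len, hE'cov, rfl⟩ := hecov
      refine ⟨(E'.map (fun g => g + Finsupp.single (m + 2) 1)).sum,
        ⟨_, by simp [hE'len], ?_, rfl⟩, ?_⟩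
      · intro g hg
        rw [List.mem_map] at hg
        obtain ⟨g', hg', rfl⟩ := hg
        exact cov_add_single (hE'cov g' hg')
      · rw [map_add_single_sum, hE'len]
        exact add_le_add hef (le_refl _)
    have h3 := hmin _ h1 h2
    rw [hD] at h3
    exact add_right_cancel h3

end PureAux
namespace PureAux

variable {k : Type*} [Field k]

lemma X_eq_mono (i : ℕ) : (X i : MvPolynomial ℕ k) = monomial (Finsupp.single i 1) 1 := rfl

lemma rootedList_shape (N : ℕ) : ∀ w ∈ rootedList k N, ∃ f : ℕ →₀ ℕ,
    w = monomial f 1 ∧ ∀ j, N < j → f j = 0 := by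
  induction N using Nat.strong_induction_on with
  | _ N ih =>
    match N with
    | 0 =>
      intro w hw
      simp only [rootedList, List.mem_singleton] at hw
      subst hw
      exact ⟨0, by simp, fun j _ => rfl⟩
    | 1 =>
      intro w hw
      simp only [rootedList, List.mem_singleton] at hw
      subst hw
      exact ⟨0, by simp, fun j _ => rfl⟩
    | 2 =>
      intro w hw
      simp only [rootedList, List.mem_cons, List.mem_singleton, List.not_mem_nil, or_false] at hw
      rcases hw with rfl | rfl
      · exact ⟨Finsupp.single 1 1, X_eq_mono 1, fun j hj => by
          rw [Finsupp.single_apply, if_neg (by omega)]⟩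
      · exact ⟨Finsupp.single 2 1, X_eq_mono 2, fun j hj => by
          rw [Finsupp.single_apply, if_neg (by omega)]⟩
    | 3 =>
      intro w hw
      simp only [rootedList, List.mem_cons, List.mem_singleton, List.not_mem_nil, or_false] at hw
      rcases hw with rfl | rfl
      · exact ⟨Finsupp.single 2 1, X_eq_mono 2, fun j hj => by
          rw [Finsupp.single_apply, if_neg (by omega)]⟩
      · refine ⟨Finsupp.single 1 1 + Finsupp.single 3 1, ?_, fun j hj => by
          rw [Finsupp.add_apply, Finsupp.single_apply, Finsupp.single_apply,
            if_neg (by omega), if_neg (by omega)]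
          omega⟩
        rw [X_eq_mono 1, X_eq_mono 3, monomial_mul, one_mul]
    | (t + 4) =>
      intro w hw
      simp only [rootedList, List.mem_append, List.mem_map] at hw
      rcases hw with ⟨u, hu, rfl⟩ | ⟨u, hu, rfl⟩
      · obtain ⟨f, rfl, hf⟩ := ih (t + 2) (by omega) u hu
        refine ⟨Finsupp.single (t + 3) 1 + f, ?_, fun j hj => by
          rw [Finsupp.add_apply, Finsupp.single_apply, if_neg (by omega), hf j (by omega)]⟩
        rw [X_eq_mono (t + 3), monomial_mul, one_mul]
      · obtain ⟨f, rfl, hf⟩ := ih (t + 1) (by omega) u hu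
        refine ⟨Finsupp.single (t + 4) 1 + Finsupp.single (t + 2) 1 + f, ?_, fun j hj => by
          rw [Finsupp.add_apply, Finsupp.add_apply, Finsupp.single_apply, Finsupp.single_apply,
            if_neg (by omega), if_neg (by omega), hf j (by omega)]
          omega⟩
        rw [X_eq_mono (t + 4), X_eq_mono (t + 2), monomial_mul, monomial_mul, one_mul, one_mul]

lemma rooted_structure (m : ℕ) :
    (rootedList k (m + 1)).length ≤ (rootedList k (m + 3)).length ∧
    (∀ i, i < (rootedList k (m + 1)).length →
      (rootedList k (m + 3)).getD i 1 = X (m + 2) * (rootedList k (m + 1)).getD i 1) ∧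
    (∀ i, (rootedList k (m + 1)).length ≤ i → i < (rootedList k (m + 3)).length →
      ∃ g : ℕ →₀ ℕ, (rootedList k (m + 3)).getD i 1 = monomial g 1 ∧ 1 ≤ g (m + 3)) := by
  match m with
  | 0 =>
    have e1 : rootedList k (0 + 1) = [1] := rfl
    have e3 : rootedList k (0 + 3) = [X 2, X 1 * X 3] := rfl
    rw [e1, e3]
    refine ⟨by simp, ?_, ?_⟩
    · intro i hi
      simp only [List.length_singleton, List.length_cons, List.length_nil] at hi
      have hi0 : i = 0 := by omega
      subst hi0
      show (X 2 : MvPolynomial ℕ k) = X (0 + 2) * 1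
      rw [mul_one]
    · intro i h1 h2
      simp only [List.length_singleton, List.length_cons, List.length_nil] at h1 h2
      have hi1 : i = 1 := by omega
      subst hi1
      refine ⟨Finsupp.single 1 1 + Finsupp.single 3 1, ?_, ?_⟩
      · show (X 1 : MvPolynomial ℕ k) * X 3 = _
        rw [X_eq_mono 1, X_eq_mono 3, monomial_mul, one_mul]
      · rw [Finsupp.add_apply, Finsupp.single_apply, Finsupp.single_apply]
        norm_num
  | (t + 1) =>
    have e2 : rootedList k (t + 1 + 1) = rootedList k (t + 2) := rfl
    rw [e2]
    have heq : rootedList k (t + 1 + 3) =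
        ((rootedList k (t + 2)).map fun u => X (t + 3) * u) ++
        ((rootedList k (t + 1)).map fun u => X (t + 4) * X (t + 2) * u) := rfl
    have hlen : (rootedList k (t + 1 + 3)).length =
        (rootedList k (t + 2)).length + (rootedList k (t + 1)).length := by
      rw [heq]; simp
    refine ⟨by rw [hlen]; omega, ?_, ?_⟩
    · intro i hi
      have hi' : i < ((rootedList k (t + 2)).map fun u => (X (t + 3) : MvPolynomial ℕ k) * u).length := by
        simpa using hi
      rw [heq, List.getD_eq_getElem _ _ (by rw [← heq, hlen]; omega),
        List.getElem_append_left hi', List.getElem_map,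
        List.getD_eq_getElem _ _ hi]
    · intro i h1 h2
      rw [hlen] at h2
      have h1' : ((rootedList k (t + 2)).map fun u => (X (t + 3) : MvPolynomial ℕ k) * u).length ≤ i := by
        simpa using h1
      rw [heq, List.getD_eq_getElem _ _ (by rw [← heq, hlen]; omega),
        List.getElem_append_right h1', List.getElem_map]
      set j := i - ((rootedList k (t + 2)).map fun u => (X (t + 3) : MvPolynomial ℕ k) * u).length
      have hj : j < (rootedList k (t + 1)).length := by
        simp only [j, List.length_map]
        omega
      have hmem : (rootedList k (t + 1))[j] ∈ rootedList k (t + 1) := List.getElem_mem _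
      obtain ⟨f, hf, hfz⟩ := rootedList_shape (t + 1) _ hmem
      refine ⟨Finsupp.single (t + 4) 1 + Finsupp.single (t + 2) 1 + f, ?_, ?_⟩
      · rw [hf, X_eq_mono (t + 4), X_eq_mono (t + 2), monomial_mul, monomial_mul, one_mul, one_mul]
      · rw [Finsupp.add_apply, Finsupp.add_apply, Finsupp.single_apply, Finsupp.single_apply,
          if_pos (by omega), if_neg (by omega), hfz (t + 1 + 3) (by omega)]
        omega

lemma prod_monomial (S : Finset ℕ) (f : ℕ → (ℕ →₀ ℕ)) :
    (∏ i ∈ S, (monomial (f i) (1 : k))) = monomial (∑ i ∈ S, f i) 1 := by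
  classical
  induction S using Finset.induction with
  | empty => simp
  | insert _ _ h ih =>
    rw [Finset.prod_insert h, Finset.sum_insert h, ih, monomial_mul, one_mul]

end PureAux
namespace PureAux

variable {k : Type*} [Field k]

lemma exprOn_shift (m s : ℕ) (u : ℕ →₀ ℕ) (hu : ∀ j, m + 1 < j → u j = 0) (a : ℕ → ℕ) :
    IsExprOn (rootedList k (m + 1)) s a (monomial u 1) ↔
      IsExprOn (rootedList k (m + 3)) s a
        ((X (m + 2) : MvPolynomial ℕ k) ^ s * monomial u 1) := by
  classical
  obtain ⟨hrR, hget, hge⟩ := rooted_structure (k := k) m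
  set r := (rootedList k (m + 1)).length with hr
  set R := (rootedList k (m + 3)).length with hR
  have hsub : Finset.range r ⊆ Finset.range R := Finset.range_subset_range.mpr hrR
  constructor
  · rintro ⟨h0, h1, h2⟩
    have hz : ∀ i ∈ Finset.range R, i ∉ Finset.range r → a i = 0 := by
      intro i _ hi
      exact h0 i (by simpa using hi)
    refine ⟨fun i hi => h0 i (le_trans hrR hi), ?_, ?_⟩
    · rw [← Finset.sum_subset hsub hz]
      exact h1
    · have hz' : ∀ i ∈ Finset.range R, i ∉ Finset.range r →
          (rootedList k (m + 3)).getD i 1 ^ a i = 1 := by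
        intro i hiR hir
        rw [hz i hiR hir, pow_zero]
      rw [← Finset.prod_subset hsub hz']
      have hcongr : ∀ i ∈ Finset.range r, (rootedList k (m + 3)).getD i 1 ^ a i =
          (X (m + 2) : MvPolynomial ℕ k) ^ a i * ((rootedList k (m + 1)).getD i 1) ^ a i := by
        intro i hi
        rw [hget i (Finset.mem_range.mp hi), mul_pow]
      rw [Finset.prod_congr rfl hcongr, Finset.prod_mul_distrib,
        Finset.prod_pow_eq_pow_sum, h1, ← h2]
  · rintro ⟨h0, h1, h2⟩
    -- all entries of a beyond r vanish
    have hmono : ∀ j, ∃ gj : ℕ →₀ ℕ, (rootedList k (m + 3)).getD j 1 = monomial gj 1 := by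
      intro j
      by_cases hj : j < R
      · have hmem : (rootedList k (m + 3)).getD j 1 ∈ rootedList k (m + 3) := by
          rw [List.getD_eq_getElem _ _ hj]
          exact List.getElem_mem _
        obtain ⟨f, hf, _⟩ := rootedList_shape (m + 3) _ hmem
        exact ⟨f, hf⟩
      · refine ⟨0, ?_⟩
        rw [List.getD_eq_default _ _ (by omega), monomial_zero', C_1]
    choose g hg using hmono
    have ha : ∀ i, r ≤ i → a i = 0 := by
      intro i hi
      by_cases hiR : R ≤ i
      · exact h0 i hiR
      push_neg at hiR
      by_contra hne
      have hprod : (X (m + 2) : MvPolynomial ℕ k) ^ s * monomial u 1 =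
          monomial (∑ j ∈ Finset.range R, a j • g j) 1 := by
        rw [h2]
        calc ∏ j ∈ Finset.range R, (rootedList k (m + 3)).getD j 1 ^ a j
            = ∏ j ∈ Finset.range R, monomial (a j • g j) (1 : k) := by
              apply Finset.prod_congr rfl
              intro j _
              rw [hg j, monomial_pow, one_pow]
          _ = monomial (∑ j ∈ Finset.range R, a j • g j) 1 := prod_monomial _ _
      rw [X_pow_eq_monomial, monomial_mul, one_mul] at hprod
      have hexp : Finsupp.single (m + 2) s + u = ∑ j ∈ Finset.range R, a j • g j := by
        rcases (monomial_eq_monomial_iff _ _ (1 : k) 1).mp hprod with ⟨h', _⟩ | ⟨h', _⟩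
        · exact h'
        · exact absurd h' one_ne_zero
      have hval := congrFun (congrArg (fun (w : ℕ →₀ ℕ) => (w : ℕ → ℕ)) hexp) (m + 3)
      simp only [Finsupp.coe_add, Pi.add_apply] at hval
      rw [Finsupp.single_apply, if_neg (by omega), hu (m + 3) (by omega)] at hval
      rw [show ((∑ j ∈ Finset.range R, a j • g j : ℕ →₀ ℕ) : ℕ → ℕ) (m + 3)
          = ∑ j ∈ Finset.range R, (a j • g j) (m + 3) from Finset.sum_apply' (m + 3)] at hval
      have hterm : (a i • g i) (m + 3) = 0 := by
        have := (Finset.sum_eq_zero_iff.mp hval.symm) i (Finset.mem_range.mpr hiR)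
        exact this
      rw [Finsupp.smul_apply, smul_eq_mul] at hterm
      obtain ⟨g', hg', hg'3⟩ := hge i hi hiR
      have : g' = g i := by
        rw [hg i] at hg'
        rcases (monomial_eq_monomial_iff _ _ (1 : k) 1).mp hg' with ⟨h', _⟩ | ⟨h', _⟩
        · exact h'.symm
        · exact absurd h' one_ne_zero
      rw [this] at hg'3
      rcases Nat.mul_eq_zero.mp hterm with h' | h'
      · exact hne h'
      · omega
    have hz : ∀ i ∈ Finset.range R, i ∉ Finset.range r → a i = 0 := by
      intro i _ hi
      exact ha i (by simpa using hi)
    refine ⟨ha, ?_, ?_⟩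
    · rw [Finset.sum_subset hsub hz]
      exact h1
    · have hz' : ∀ i ∈ Finset.range R, i ∉ Finset.range r →
          (rootedList k (m + 3)).getD i 1 ^ a i = 1 := by
        intro i hiR hir
        rw [hz i hiR hir, pow_zero]
      have hXne : (X (m + 2) : MvPolynomial ℕ k) ^ s ≠ 0 := pow_ne_zero _ (X_ne_zero _)
      have hcongr : ∀ i ∈ Finset.range r, (rootedList k (m + 3)).getD i 1 ^ a i =
          (X (m + 2) : MvPolynomial ℕ k) ^ a i * ((rootedList k (m + 1)).getD i 1) ^ a i := by
        intro i hi
        rw [hget i (Finset.mem_range.mp hi), mul_pow]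
      have hsum_r : ∑ i ∈ Finset.range r, a i = s := by
        rw [Finset.sum_subset hsub hz]
        exact h1
      have hchain : (X (m + 2) : MvPolynomial ℕ k) ^ s * monomial u 1 =
          (X (m + 2) : MvPolynomial ℕ k) ^ s *
            ∏ i ∈ Finset.range r, ((rootedList k (m + 1)).getD i 1) ^ a i := by
        rw [h2, ← Finset.prod_subset hsub hz', Finset.prod_congr rfl hcongr,
          Finset.prod_mul_distrib, Finset.prod_pow_eq_pow_sum, hsum_r]
      exact mul_left_cancel₀ hXne hchain

lemma maxExpr_shift (m s : ℕ) (u : ℕ →₀ ℕ) (hu : ∀ j, m + 1 < j → u j = 0) (a : ℕ → ℕ) :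
    IsMaxExpr (rootedList k (m + 1)) s a (monomial u 1) ↔
      IsMaxExpr (rootedList k (m + 3)) s a
        ((X (m + 2) : MvPolynomial ℕ k) ^ s * monomial u 1) := by
  unfold IsMaxExpr
  constructor
  · rintro ⟨h1, h2⟩
    exact ⟨(exprOn_shift m s u hu a).mp h1,
      fun b hb hne => h2 b ((exprOn_shift m s u hu b).mpr hb) hne⟩
  · rintro ⟨h1, h2⟩
    exact ⟨(exprOn_shift m s u hu a).mpr h1,
      fun b hb hne => h2 b ((exprOn_shift m s u hu b).mp hb) hne⟩

lemma rootedGt_shift (m s : ℕ) (u v : ℕ →₀ ℕ) (hu : ∀ j, m + 1 < j → u j = 0)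
    (hv : ∀ j, m + 1 < j → v j = 0) :
    rootedGt (rootedList k (m + 1)) s (monomial u 1) (monomial v 1) ↔
      rootedGt (rootedList k (m + 3)) s
        ((X (m + 2) : MvPolynomial ℕ k) ^ s * monomial u 1)
        ((X (m + 2) : MvPolynomial ℕ k) ^ s * monomial v 1) := by
  unfold rootedGt
  constructor
  · rintro ⟨a, b, ha, hb, hab⟩
    exact ⟨a, b, (maxExpr_shift m s u hu a).mp ha, (maxExpr_shift m s v hv b).mp hb, hab⟩
  · rintro ⟨a, b, ha, hb, hab⟩
    exact ⟨a, b, (maxExpr_shift m s u hu a).mpr ha, (maxExpr_shift m s v hv b).mpr hb, hab⟩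

lemma sFold_mono_form (N s : ℕ) (U : MvPolynomial ℕ k)
    (h : U ∈ sFold (pathCoverIdeal k N) s) :
    ∃ u : ℕ →₀ ℕ, U = monomial u 1 ∧ ∀ j, N < j → u j = 0 := by
  obtain ⟨E, hlen, hcov, rfl⟩ := (sFold_iff N s U).mp h
  refine ⟨E.sum, rfl, ?_⟩
  intro j hj
  rw [list_sum_apply]
  apply List.sum_eq_zero
  intro x hx
  rw [List.mem_map] at hx
  obtain ⟨e, he, rfl⟩ := hx
  exact ((hcov e he).shape j).2 (by rw [Finset.mem_Icc]; omega)

end PureAux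
/-- (Pure s-fold products divisible by `x_{n-1}^s`.) For `n ≥ 3` and
`s ≥ 1`: `U, V ∈ F(J(P_{n-2})^s)` iff `x_{n-1}^s U, x_{n-1}^s V ∈ F(J(P_n)^s)`; and in
that case (1) `U >_R V` iff `x_{n-1}^s U >_R x_{n-1}^s V`, and (2) `U ∈ G(J(P_{n-2})^s)`
iff `x_{n-1}^s U ∈ G(J(P_n)^s)`. -/
theorem pure_sFold_xnm1 (k : Type*) [Field k] (n s : ℕ) (hn : 3 ≤ n) (hs : 1 ≤ s)
    (U V : MvPolynomial ℕ k) :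
    ((U ∈ sFold (pathCoverIdeal k (n - 2)) s ∧ V ∈ sFold (pathCoverIdeal k (n - 2)) s) ↔
      ((X (n - 1) : MvPolynomial ℕ k) ^ s * U ∈ sFold (pathCoverIdeal k n) s ∧
        (X (n - 1) : MvPolynomial ℕ k) ^ s * V ∈ sFold (pathCoverIdeal k n) s)) ∧
    (U ∈ sFold (pathCoverIdeal k (n - 2)) s → V ∈ sFold (pathCoverIdeal k (n - 2)) s →
      ((rootedGt (rootedList k (n - 2)) s U V ↔
          rootedGt (rootedList k n) s
            ((X (n - 1) : MvPolynomial ℕ k) ^ s * U)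
            ((X (n - 1) : MvPolynomial ℕ k) ^ s * V)) ∧
       (U ∈ minGens ((pathCoverIdeal k (n - 2)) ^ s) ↔
          (X (n - 1) : MvPolynomial ℕ k) ^ s * U ∈ minGens ((pathCoverIdeal k n) ^ s)))) := by
  obtain ⟨m, rfl⟩ : ∃ m, n = m + 3 := ⟨n - 3, by omega⟩
  have h1 : m + 3 - 1 = m + 2 := rfl
  have h2 : m + 3 - 2 = m + 1 := rfl
  rw [h1, h2]
  refine ⟨and_congr (PureAux.sFold_shift m s U).symm (PureAux.sFold_shift m s V).symm,
    fun hU hV => ⟨?_, PureAux.minGens_pow_shift m s U hU⟩⟩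
  obtain ⟨u, rfl, hu⟩ := PureAux.sFold_mono_form (m + 1) s U hU
  obtain ⟨v, rfl, hv⟩ := PureAux.sFold_mono_form (m + 1) s V hV
  exact PureAux.rootedGt_shift m s u v hu hv
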